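/- For differentiable curves A : ℝ → M₂(ℝ) with det A(x) = 1 for all x, define the affine transformation T_A on curves a : ℝ → ℝ³ by (T_A a)(x) = B(A)(x)·a(x) + θ(A)(x), where B(A) and θ(A) are the representation matrix and cocycle built from the entries of A. Then for any two such curves A₁, A₂ and any curve a : ℝ → ℝ³, T_{A₁}(T_{A₂}(a)) = T_{A₁·A₂}(a). -/

import Mathlib

open Matrix

/-- The map `B` sends a 2×2 matrix `A = [[α, β], [γ, δ]]` to the 3×3 matrix
with rows `(δ², -δγ, γ²)`, `(-2βδ, αδ + βγ, -2αγ)`, `(β², -αβ, α²)`. -/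
def riccatiRep (A : Matrix (Fin 2) (Fin 2) ℝ) : Matrix (Fin 3) (Fin 3) ℝ :=
  !![(A 1 1) ^ 2, -(A 1 1) * (A 1 0), (A 1 0) ^ 2;
     -2 * (A 0 1) * (A 1 1), (A 0 0) * (A 1 1) + (A 0 1) * (A 1 0),
       -2 * (A 0 0) * (A 1 0);
     (A 0 1) ^ 2, -(A 0 0) * (A 0 1), (A 0 0) ^ 2]

/-- For a curve `A(x) = [[α(x), β(x)], [γ(x), δ(x)]]` of 2×2 matrices, the
cocycle `θ(A)(x) = (γδ' - δγ', δα' - αδ' + βγ' - γβ', αβ' - βα')(x)`. -/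
noncomputable def riccatiCocycle (A : ℝ → Matrix (Fin 2) (Fin 2) ℝ) (x : ℝ) :
    Fin 3 → ℝ :=
  ![A x 1 0 * deriv (fun t => A t 1 1) x - A x 1 1 * deriv (fun t => A t 1 0) x,
    A x 1 1 * deriv (fun t => A t 0 0) x - A x 0 0 * deriv (fun t => A t 1 1) x
      + A x 0 1 * deriv (fun t => A t 1 0) x - A x 1 0 * deriv (fun t => A t 0 1) x,
    A x 0 0 * deriv (fun t => A t 0 1) x - A x 0 1 * deriv (fun t => A t 0 0) x]

/-- The affine transformation `T_A` acting on curves `a : ℝ → ℝ³`: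
`(T_A a)(x) = B(A(x))·a(x) + θ(A)(x)`. -/
noncomputable def riccatiAction (A : ℝ → Matrix (Fin 2) (Fin 2) ℝ)
    (a : ℝ → Fin 3 → ℝ) (x : ℝ) : Fin 3 → ℝ :=
  (riccatiRep (A x)).mulVec (a x) + riccatiCocycle A x

/-- **The formulas define an affine action:** for differentiable
SL(2,ℝ)-valued curves `A₁`, `A₂` and any curve `a : ℝ → ℝ³`,
`T_{A₁}(T_{A₂}(a)) = T_{A₁·A₂}(a)` (pointwise matrix product). -/
theorem riccatiAction_mul (A₁ A₂ : ℝ → Matrix (Fin 2) (Fin 2) ℝ)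
    (hd₁ : ∀ (i j : Fin 2) (x : ℝ), DifferentiableAt ℝ (fun t => A₁ t i j) x)
    (hd₂ : ∀ (i j : Fin 2) (x : ℝ), DifferentiableAt ℝ (fun t => A₂ t i j) x)
    (hdet₁ : ∀ x : ℝ, (A₁ x).det = 1) (hdet₂ : ∀ x : ℝ, (A₂ x).det = 1)
    (a : ℝ → Fin 3 → ℝ) :
    riccatiAction A₁ (riccatiAction A₂ a)
      = riccatiAction (fun t => A₁ t * A₂ t) a := by
  funext x
  have h2 := hdet₂ x
  rw [Matrix.det_fin_two] at h2
  have key : ∀ i j : Fin 2,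
      deriv (fun t => A₁ t i 0 * A₂ t 0 j + A₁ t i 1 * A₂ t 1 j) x
        = deriv (fun t => A₁ t i 0) x * A₂ x 0 j + A₁ x i 0 * deriv (fun t => A₂ t 0 j) x
          + (deriv (fun t => A₁ t i 1) x * A₂ x 1 j
              + A₁ x i 1 * deriv (fun t => A₂ t 1 j) x) := by
    intro i j
    rw [deriv_fun_add ((hd₁ i 0 x).fun_mul (hd₂ 0 j x)) ((hd₁ i 1 x).fun_mul (hd₂ 1 j x)),
        deriv_fun_mul (hd₁ i 0 x) (hd₂ 0 j x), deriv_fun_mul (hd₁ i 1 x) (hd₂ 1 j x)]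
  funext i
  fin_cases i <;>
    simp [riccatiAction, riccatiCocycle, riccatiRep, Matrix.mul_apply,
      Fin.sum_univ_two, Matrix.mulVec, dotProduct, Fin.sum_univ_three, key]
  · linear_combination (A₁ x 1 1 * deriv (fun t => A₁ t 1 0) x
      - A₁ x 1 0 * deriv (fun t => A₁ t 1 1) x) * h2
  · linear_combination -(A₁ x 1 1 * deriv (fun t => A₁ t 0 0) x
      - A₁ x 1 0 * deriv (fun t => A₁ t 0 1) x
      + A₁ x 0 1 * deriv (fun t => A₁ t 1 0) x
      - A₁ x 0 0 * deriv (fun t => A₁ t 1 1) x) * h2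
  · linear_combination -(A₁ x 0 0 * deriv (fun t => A₁ t 0 1) x
      - A₁ x 0 1 * deriv (fun t => A₁ t 0 0) x) * h2
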